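/- Let A be a countable group equipped with a proper left-invariant metric d. Then for any subgroups B and C of A, any element g ∈ A, and any constant K ≥ 0, there exists a constant M ≥ 0 (depending on B, C, g and K) such that B ∩ N_K(gC) ⊆ N_M(B ∩ gCg⁻¹), where N_K(X) denotes the closed K-neighborhood of the set X with respect to d. -/

import Mathlib

/-- Let `A` be a countable group with a proper left-invariant metric `d`.
For any subgroups `B, C ≤ A`, any `g ∈ A` and any `K ≥ 0`, there is `M ≥ 0` with
`B ∩ N_K(gC) ⊆ N_M(B ∩ gCg⁻¹)`. -/
theorem stmt0 {A : Type*} [Group A] [Countable A] [MetricSpace A]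
    (hleft : ∀ a x y : A, dist (a * x) (a * y) = dist x y)
    (hproper : ∀ r : ℝ, {a : A | dist 1 a ≤ r}.Finite)
    (B C : Subgroup A) (g : A) (K : ℝ) (hK : 0 ≤ K) :
    ∃ M : ℝ, 0 ≤ M ∧ ∀ b ∈ B, (∃ c ∈ C, dist b (g * c) ≤ K) →
      ∃ x, x ∈ B ∧ (∃ c ∈ C, x = g * c * g⁻¹) ∧ dist b x ≤ M := by
  classical
  set P : A → Prop := fun t => ∃ b c : A, b ∈ B ∧ c ∈ C ∧ b⁻¹ * (g * c) = t with hP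
  set m : A → ℝ := fun t => if h : P t then dist (1 : A) h.choose⁻¹ else 0 with hm
  set Ft := (hproper K).toFinset with hFt
  refine ⟨∑ t ∈ Ft, |m t|, Finset.sum_nonneg fun t _ => abs_nonneg _, ?_⟩
  rintro b hb ⟨c, hc, hdist⟩
  set t := b⁻¹ * (g * c) with ht
  have htK : dist (1 : A) t ≤ K := by
    have := hleft b 1 t
    rw [mul_one, ht, mul_inv_cancel_left] at this
    rwa [← this]
  have htFt : t ∈ Ft := by simp [hFt, htK]
  have hPt : P t := ⟨b, c, hb, hc, rfl⟩
  set b₁ := hPt.choose with hb₁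
  obtain ⟨c₁, hc₁B, hc₁C, heq₁⟩ := hPt.choose_spec
  refine ⟨b * b₁⁻¹, B.mul_mem hb (B.inv_mem hc₁B), ⟨c * c₁⁻¹, C.mul_mem hc (C.inv_mem hc₁C), ?_⟩, ?_⟩
  · -- b = (g*c)*t⁻¹, b₁ = (g*c₁)*t⁻¹
    have hbe : b = (g * c) * t⁻¹ := by rw [ht]; group
    have hbe₁ : b₁ = (g * c₁) * t⁻¹ := by
      have : b₁⁻¹ * (g * c₁) = t := heq₁
      rw [← this]; group
    rw [hbe, hbe₁]; group
  · have : dist b (b * b₁⁻¹) = dist (1 : A) b₁⁻¹ := by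
      have := hleft b 1 b₁⁻¹
      rwa [mul_one] at this
    rw [this]
    have hmt : m t = dist (1 : A) b₁⁻¹ := by
      rw [hm]; simp only [dif_pos hPt]; rfl
    calc dist (1 : A) b₁⁻¹ = m t := hmt.symm
      _ ≤ |m t| := le_abs_self _
      _ ≤ ∑ t ∈ Ft, |m t| := Finset.single_le_sum (fun i _ => abs_nonneg (m i)) htFt
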